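/- The double zeta value ζ(3,1) equals (3/2)ζ(4) − (1/2)ζ(2)², which equals π⁴/360. -/

import Mathlib

open Real

noncomputable def zeta1 (k : ℕ) : ℝ := ∑' n : ℕ+, 1 / (n : ℝ) ^ k

noncomputable def zeta2 (a b : ℕ) : ℝ :=
  ∑' p : {p : ℕ × ℕ // p.2 < p.1 ∧ 0 < p.2},
    1 / ((p.val.1 : ℝ) ^ a * (p.val.2 : ℝ) ^ b)

/-! Auxiliary material -/

lemma hasSum_shift {k : ℕ} {c : ℝ} (hk : 1 ≤ k)
    (h : HasSum (fun n : ℕ => (1 : ℝ) / (n : ℝ) ^ k) c) :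
    HasSum (fun n : ℕ => (1 : ℝ) / ((n : ℝ) + 1) ^ k) c := by
  have hinj : Function.Injective (fun n : ℕ => n + 1) := fun a b h => by simpa using h
  have h0 : ∀ x ∉ Set.range (fun n : ℕ => n + 1), (1 : ℝ) / (x : ℝ) ^ k = 0 := by
    intro x hx
    have : x = 0 := by
      by_contra hc
      exact hx ⟨x - 1, by simp; omega⟩
    simp [this, zero_pow (by omega : k ≠ 0)]
  have := (hinj.hasSum_iff h0).2 h
  simpa only [Function.comp_def, Nat.cast_add, Nat.cast_one, one_div] using this

lemma hs2 : HasSum (fun n : ℕ => (1 : ℝ) / ((n : ℝ) + 1) ^ 2) (π ^ 2 / 6) :=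
  hasSum_shift (by norm_num) hasSum_zeta_two

lemma hs4 : HasSum (fun n : ℕ => (1 : ℝ) / ((n : ℝ) + 1) ^ 4) (π ^ 4 / 90) :=
  hasSum_shift (by norm_num) hasSum_zeta_four

lemma zeta1_eq (k : ℕ) (c : ℝ) (hk : 1 ≤ k)
    (h : HasSum (fun n : ℕ => (1 : ℝ) / (n : ℝ) ^ k) c) : zeta1 k = c := by
  have hinj : Function.Injective (fun n : ℕ+ => (n : ℕ)) := fun a b h => PNat.coe_injective h
  have h0 : ∀ x ∉ Set.range (fun n : ℕ+ => (n : ℕ)), (1 : ℝ) / (x : ℝ) ^ k = 0 := by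
    intro x hx
    have : x = 0 := by
      by_contra hc
      exact hx ⟨⟨x, by omega⟩, rfl⟩
    simp [this, zero_pow (by omega : k ≠ 0)]
  have := (hinj.hasSum_iff h0).2 h
  exact this.tsum_eq

lemma zeta1_two : zeta1 2 = π ^ 2 / 6 := zeta1_eq 2 _ (by norm_num) hasSum_zeta_two
lemma zeta1_four : zeta1 4 = π ^ 4 / 90 := zeta1_eq 4 _ (by norm_num) hasSum_zeta_four

/-- master equiv for zeta2 -/
def E : ℕ × ℕ ≃ {p : ℕ × ℕ // p.2 < p.1 ∧ 0 < p.2} where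
  toFun q := ⟨(q.1 + q.2 + 2, q.1 + 1), by omega, by omega⟩
  invFun p := (p.val.2 - 1, p.val.1 - p.val.2 - 1)
  left_inv q := by obtain ⟨a, b⟩ := q; simp; omega
  right_inv p := by
    obtain ⟨⟨m, n⟩, h1, h2⟩ := p
    apply Subtype.ext
    apply Prod.ext <;> simp <;> omega

lemma zeta2_eq (s t : ℕ) :
    zeta2 s t = ∑' q : ℕ × ℕ,
      1 / (((q.1 : ℝ) + (q.2 : ℝ) + 2) ^ s * ((q.1 : ℝ) + 1) ^ t) := by
  rw [zeta2, ← E.tsum_eq]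
  apply tsum_congr
  intro q
  obtain ⟨a, b⟩ := q
  simp only [E, Equiv.coe_fn_mk]
  push_cast
  ring_nf

lemma zeta2_eq' (s t : ℕ) :
    zeta2 s t = ∑' q : ℕ × ℕ,
      1 / (((q.1 : ℝ) + (q.2 : ℝ) + 2) ^ s * ((q.2 : ℝ) + 1) ^ t) := by
  rw [zeta2_eq s t, ← (Equiv.prodComm ℕ ℕ).tsum_eq]
  apply tsum_congr
  intro q
  obtain ⟨a, b⟩ := q
  simp only [Equiv.prodComm_apply, Prod.swap]
  ring_nf

noncomputable def f22 : ℕ × ℕ → ℝ :=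
  fun p => 1 / ((p.1 : ℝ) + 1) ^ 2 * (1 / ((p.2 : ℝ) + 1) ^ 2)

lemma f22_summable : Summable f22 := by
  unfold f22
  apply Summable.mul_of_nonneg hs2.summable hs2.summable
  · intro n; positivity
  · intro n; positivity

lemma f22_hasSum : HasSum f22 (π ^ 2 / 6 * (π ^ 2 / 6)) := by
  unfold f22
  apply HasSum.mul hs2 hs2
  exact f22_summable

def Sgt : Set (ℕ × ℕ) := {p | p.2 < p.1}
def Slt : Set (ℕ × ℕ) := {p | p.1 < p.2}
def Sdiag : Set (ℕ × ℕ) := {p | p.1 = p.2}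

def ES : ℕ × ℕ ≃ Sgt where
  toFun q := ⟨(q.1 + q.2 + 1, q.2), by simp [Sgt]⟩
  invFun p := (p.val.1 - p.val.2 - 1, p.val.2)
  left_inv q := by obtain ⟨a, b⟩ := q; simp; omega
  right_inv p := by
    obtain ⟨⟨m, n⟩, h⟩ := p
    simp only [Sgt, Set.mem_setOf_eq] at h
    apply Subtype.ext
    apply Prod.ext <;> simp <;> omega

def ET : ℕ × ℕ ≃ Slt where
  toFun q := ⟨(q.1, q.1 + q.2 + 1), by simp [Slt]⟩
  invFun p := (p.val.1, p.val.2 - p.val.1 - 1)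
  left_inv q := by obtain ⟨a, b⟩ := q; simp; omega
  right_inv p := by
    obtain ⟨⟨m, n⟩, h⟩ := p
    simp only [Slt, Set.mem_setOf_eq] at h
    apply Subtype.ext
    apply Prod.ext <;> simp <;> omega

def ED : ℕ ≃ Sdiag where
  toFun d := ⟨(d, d), rfl⟩
  invFun p := p.val.1
  left_inv d := rfl
  right_inv p := by
    obtain ⟨⟨m, n⟩, h⟩ := p
    simp only [Sdiag, Set.mem_setOf_eq] at h
    apply Subtype.ext
    apply Prod.ext <;> simp <;> omega

/-- The "stuffle" relation: ζ(2)² = 2 ζ(2,2) + ζ(4). -/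
lemma stuffle : π ^ 2 / 6 * (π ^ 2 / 6) = zeta2 2 2 + zeta2 2 2 + π ^ 4 / 90 := by
  classical
  rw [← f22_hasSum.tsum_eq]
  have hdecomp : ∀ p, f22 p =
      Sgt.indicator f22 p + Slt.indicator f22 p + Sdiag.indicator f22 p := by
    intro p
    rcases lt_trichotomy p.2 p.1 with h | h | h
    · simp only [Set.indicator_apply, Sgt, Slt, Sdiag, Set.mem_setOf_eq]
      rw [if_pos h, if_neg (by omega), if_neg (by omega)]; ring
    · simp only [Set.indicator_apply, Sgt, Slt, Sdiag, Set.mem_setOf_eq]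
      rw [if_neg (by omega), if_neg (by omega), if_pos (by omega)]; ring
    · simp only [Set.indicator_apply, Sgt, Slt, Sdiag, Set.mem_setOf_eq]
      rw [if_neg (by omega), if_pos h, if_neg (by omega)]; ring
  have hS : Summable (Sgt.indicator f22) := f22_summable.indicator Sgt
  have hT : Summable (Slt.indicator f22) := f22_summable.indicator Slt
  have hD : Summable (Sdiag.indicator f22) := f22_summable.indicator Sdiag
  rw [tsum_congr hdecomp, Summable.tsum_add (hS.add hT) hD, Summable.tsum_add hS hT]
  have e1 : ∑' p, Sgt.indicator f22 p = zeta2 2 2 := by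
    rw [← tsum_subtype Sgt f22, ← ES.tsum_eq (fun x : Sgt => f22 x), zeta2_eq' 2 2]
    apply tsum_congr
    intro q
    obtain ⟨a, b⟩ := q
    simp only [ES, Equiv.coe_fn_mk, f22]
    rw [div_mul_div_comm, one_mul]
    push_cast
    congr 1
    ring
  have e2 : ∑' p, Slt.indicator f22 p = zeta2 2 2 := by
    rw [← tsum_subtype Slt f22, ← ET.tsum_eq (fun x : Slt => f22 x), zeta2_eq 2 2]
    apply tsum_congr
    intro q
    obtain ⟨a, b⟩ := q
    simp only [ET, Equiv.coe_fn_mk, f22]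
    rw [div_mul_div_comm, one_mul]
    push_cast
    congr 1
    ring
  have e3 : ∑' p, Sdiag.indicator f22 p = π ^ 4 / 90 := by
    rw [← tsum_subtype Sdiag f22, ← ED.tsum_eq (fun x : Sdiag => f22 x), ← hs4.tsum_eq]
    apply tsum_congr
    intro d
    simp only [ED, Equiv.coe_fn_mk, f22]
    rw [div_mul_div_comm, one_mul]
    congr 1
    ring
  rw [e1, e2, e3]

/-- The four pieces of the partial-fraction ("shuffle") decomposition. -/
noncomputable def g1 : ℕ × ℕ → ℝ :=
  fun p => 1 / (((p.1 : ℝ) + (p.2 : ℝ) + 2) ^ 2 * ((p.1 : ℝ) + 1) ^ 2)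
noncomputable def g2 : ℕ × ℕ → ℝ :=
  fun p => 1 / (((p.1 : ℝ) + (p.2 : ℝ) + 2) ^ 2 * ((p.2 : ℝ) + 1) ^ 2)
noncomputable def g3 : ℕ × ℕ → ℝ :=
  fun p => 2 * (1 / (((p.1 : ℝ) + (p.2 : ℝ) + 2) ^ 3 * ((p.1 : ℝ) + 1) ^ 1))
noncomputable def g4 : ℕ × ℕ → ℝ :=
  fun p => 2 * (1 / (((p.1 : ℝ) + (p.2 : ℝ) + 2) ^ 3 * ((p.2 : ℝ) + 1) ^ 1))

lemma g1_summable : Summable g1 := by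
  apply Summable.of_nonneg_of_le (fun p => by unfold g1; positivity) _ f22_summable
  intro p
  have ha : (0:ℝ) ≤ (p.1 : ℝ) := Nat.cast_nonneg _
  have hb : (0:ℝ) ≤ (p.2 : ℝ) := Nat.cast_nonneg _
  have hf : f22 p = 1 / (((p.1:ℝ)+1)^2 * ((p.2:ℝ)+1)^2) := by
    unfold f22; rw [div_mul_div_comm, one_mul]
  rw [hf]
  unfold g1
  apply one_div_le_one_div_of_le (by positivity)
  nlinarith [sq_nonneg ((p.1:ℝ)+1), sq_nonneg ((p.2:ℝ)+1), mul_nonneg ha hb]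

lemma g2_summable : Summable g2 := by
  apply Summable.of_nonneg_of_le (fun p => by unfold g2; positivity) _ f22_summable
  intro p
  have ha : (0:ℝ) ≤ (p.1 : ℝ) := Nat.cast_nonneg _
  have hb : (0:ℝ) ≤ (p.2 : ℝ) := Nat.cast_nonneg _
  have hf : f22 p = 1 / (((p.1:ℝ)+1)^2 * ((p.2:ℝ)+1)^2) := by
    unfold f22; rw [div_mul_div_comm, one_mul]
  rw [hf]
  unfold g2
  apply one_div_le_one_div_of_le (by positivity)
  nlinarith [sq_nonneg ((p.1:ℝ)+1), sq_nonneg ((p.2:ℝ)+1), mul_nonneg ha hb]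

lemma g3_summable : Summable g3 := by
  apply Summable.of_nonneg_of_le (fun p => by unfold g3; positivity) _ (f22_summable.mul_left 2)
  intro p
  have ha : (0:ℝ) ≤ (p.1 : ℝ) := Nat.cast_nonneg _
  have hb : (0:ℝ) ≤ (p.2 : ℝ) := Nat.cast_nonneg _
  have hf : f22 p = 1 / (((p.1:ℝ)+1)^2 * ((p.2:ℝ)+1)^2) := by
    unfold f22; rw [div_mul_div_comm, one_mul]
  rw [hf]
  unfold g3
  apply mul_le_mul_of_nonneg_left _ (by norm_num : (0:ℝ) ≤ 2)
  apply one_div_le_one_div_of_le (by positivity)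
  have h1 : ((p.1:ℝ)+1) * ((p.2:ℝ)+1)^2 ≤ ((p.1:ℝ)+(p.2:ℝ)+2)^3 := by nlinarith
  nlinarith [h1, sq_nonneg ((p.1:ℝ)+1)]

lemma g4_summable : Summable g4 := by
  apply Summable.of_nonneg_of_le (fun p => by unfold g4; positivity) _ (f22_summable.mul_left 2)
  intro p
  have ha : (0:ℝ) ≤ (p.1 : ℝ) := Nat.cast_nonneg _
  have hb : (0:ℝ) ≤ (p.2 : ℝ) := Nat.cast_nonneg _
  have hf : f22 p = 1 / (((p.1:ℝ)+1)^2 * ((p.2:ℝ)+1)^2) := by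
    unfold f22; rw [div_mul_div_comm, one_mul]
  rw [hf]
  unfold g4
  apply mul_le_mul_of_nonneg_left _ (by norm_num : (0:ℝ) ≤ 2)
  apply one_div_le_one_div_of_le (by positivity)
  have h1 : ((p.2:ℝ)+1) * ((p.1:ℝ)+1)^2 ≤ ((p.1:ℝ)+(p.2:ℝ)+2)^3 := by nlinarith
  nlinarith [h1, sq_nonneg ((p.2:ℝ)+1)]

/-- Partial fraction decomposition pointwise. -/
lemma decomp : ∀ p : ℕ × ℕ, f22 p = g1 p + g2 p + g3 p + g4 p := by
  intro p
  unfold f22 g1 g2 g3 g4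
  have ha : (0:ℝ) < (p.1:ℝ) + 1 := by positivity
  have hb : (0:ℝ) < (p.2:ℝ) + 1 := by positivity
  have hx : (0:ℝ) < (p.1:ℝ) + (p.2:ℝ) + 2 := by positivity
  field_simp
  ring

/-- The "shuffle" relation: ζ(2)² = 2 ζ(2,2) + 4 ζ(3,1). -/
lemma shuffle : π ^ 2 / 6 * (π ^ 2 / 6)
    = zeta2 2 2 + zeta2 2 2 + (2 * zeta2 3 1 + 2 * zeta2 3 1) := by
  rw [← f22_hasSum.tsum_eq, tsum_congr decomp]
  rw [Summable.tsum_add ((g1_summable.add g2_summable).add g3_summable) g4_summable,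
    Summable.tsum_add (g1_summable.add g2_summable) g3_summable,
    Summable.tsum_add g1_summable g2_summable]
  have t1 : ∑' p, g1 p = zeta2 2 2 := by unfold g1; exact (zeta2_eq 2 2).symm
  have t2 : ∑' p, g2 p = zeta2 2 2 := by unfold g2; exact (zeta2_eq' 2 2).symm
  have t3 : ∑' p, g3 p = 2 * zeta2 3 1 := by
    unfold g3; rw [tsum_mul_left, ← zeta2_eq 3 1]
  have t4 : ∑' p, g4 p = 2 * zeta2 3 1 := by
    unfold g4; rw [tsum_mul_left, ← zeta2_eq' 3 1]
  rw [t1, t2, t3, t4]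
  ring

theorem zeta_three_one :
    zeta2 3 1 = 3 / 2 * zeta1 4 - 1 / 2 * (zeta1 2) ^ 2 ∧
    zeta2 3 1 = Real.pi ^ 4 / 360 := by
  have hpi : π ^ 2 / 6 * (π ^ 2 / 6) = π ^ 4 / 36 := by ring
  have h22 : zeta2 2 2 = π ^ 4 / 120 := by
    have h := stuffle
    rw [hpi] at h
    linarith
  have h31 : zeta2 3 1 = π ^ 4 / 360 := by
    have h := shuffle
    rw [hpi, h22] at h
    linarith
  refine ⟨?_, h31⟩
  rw [zeta1_four, zeta1_two, h31]
  ring
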